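/- Let P consist of M i.i.d. uniformly random measurement strings in {X,Y,Z}^n and let O = [o_1,…,o_L] be Pauli observables. Then E_P[Conf_ε(O;P)] = ∑_{ℓ=1}^L (1 − ν/3^{w(o_ℓ)})^M with ν = 1 − exp(−ε²/2). -/

import Mathlib

inductive Pauli | I | X | Y | Z
deriving DecidableEq

instance : Fintype Pauli :=
  ⟨⟨{Pauli.I, Pauli.X, Pauli.Y, Pauli.Z}, by decide⟩, fun x => by cases x <;> decide⟩

inductive Axis | X | Y | Z
deriving DecidableEq

instance : Fintype Axis :=
  ⟨⟨{Axis.X, Axis.Y, Axis.Z}, by decide⟩, fun x => by cases x <;> decide⟩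

def Axis.toPauli : Axis → Pauli
  | .X => .X
  | .Y => .Y
  | .Z => .Z

/-- single-qubit hitting relation: `o = I` or `o = p`. -/
def hit1 (o : Pauli) (p : Axis) : Prop := o = Pauli.I ∨ o = p.toPauli

instance (o : Pauli) (p : Axis) : Decidable (hit1 o p) := by unfold hit1; infer_instance

/-- `o ▷ p`: every coordinate of `o` is `I` or matches `p`. -/
def hits {n : ℕ} (o : Fin n → Pauli) (p : Fin n → Axis) : Prop := ∀ k, hit1 (o k) (p k)

instance {n : ℕ} (o : Fin n → Pauli) (p : Fin n → Axis) : Decidable (hits o p) := by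
  unfold hits; infer_instance

/-- weight: number of non-identity coordinates. -/
def weight {n : ℕ} (o : Fin n → Pauli) : ℕ :=
  (Finset.univ.filter (fun k => o k ≠ Pauli.I)).card

/-- hitting count of `o` among the measurements `P`. -/
def hitCount {n M : ℕ} (o : Fin n → Pauli) (P : Fin M → Fin n → Axis) : ℕ :=
  (Finset.univ.filter (fun m => hits o (P m))).card

/-- the confidence bound. -/
noncomputable def Conf {n M L : ℕ} (ε : ℝ) (O : Fin L → Fin n → Pauli)
    (P : Fin M → Fin n → Axis) : ℝ :=
  ∑ ℓ, Real.exp (-(ε ^ 2 / 2) * (hitCount (O ℓ) P))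

-- count hitting patterns
lemma hitcard {n : ℕ} (o : Fin n → Pauli) :
    (Finset.univ.filter (fun p : Fin n → Axis => hits o p)).card = 3 ^ (n - weight o) := by
  have h1 : Finset.univ.filter (fun p : Fin n → Axis => hits o p)
      = Fintype.piFinset (fun k => Finset.univ.filter (fun a => hit1 (o k) a)) := by
    ext p
    rw [Finset.mem_filter]
    simp [Fintype.mem_piFinset, hits]
  rw [h1, Fintype.card_piFinset]
  have h2 : ∀ k, (Finset.univ.filter (fun a => hit1 (o k) a)).card
      = if o k = Pauli.I then 3 else 1 := by
    intro k
    cases h : o k <;> simp [hit1, h] <;> decide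
  calc ∏ k, (Finset.univ.filter (fun a => hit1 (o k) a)).card
      = ∏ k, if o k = Pauli.I then 3 else 1 := by simp_rw [h2]
    _ = 3 ^ (Finset.univ.filter (fun k => o k = Pauli.I)).card := by
        rw [← Finset.prod_filter, Finset.prod_const]
    _ = 3 ^ (n - weight o) := by
        congr 1
        have := Finset.card_filter_add_card_filter_not
          (s := (Finset.univ : Finset (Fin n))) (p := fun k => o k = Pauli.I)
        simp only [Finset.card_univ, Fintype.card_fin] at this
        unfold weight
        simp only [ne_eq]
        omega

/-- the expected confidence bound under i.i.d. uniform measurements. -/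
theorem stmt7 {n : ℕ} (M L : ℕ) (O : Fin L → Fin n → Pauli) (ε : ℝ) :
    (∑ P : Fin M → Fin n → Axis, Conf ε O P)
        / (Fintype.card (Fin M → Fin n → Axis) : ℝ)
      = ∑ ℓ, (1 - (1 - Real.exp (-(ε ^ 2 / 2))) / 3 ^ weight (O ℓ)) ^ M := by
  set c := Real.exp (-(ε ^ 2 / 2)) with hc
  have hcard : (Fintype.card (Fin M → Fin n → Axis) : ℝ) = ((3:ℝ) ^ n) ^ M := by
    rw [Fintype.card_fun, Fintype.card_fun]
    rw [show Fintype.card Axis = 3 from rfl]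
    simp only [Fintype.card_fin]
    push_cast
    ring
  unfold Conf
  rw [Finset.sum_comm, Finset.sum_div]
  apply Finset.sum_congr rfl
  intro ℓ _
  set o := O ℓ with ho
  have hwle : weight o ≤ n := by
    unfold weight
    simpa using Finset.card_filter_le Finset.univ (fun k => o k ≠ Pauli.I)
  -- exp term as power
  have hterm : ∀ P : Fin M → Fin n → Axis,
      Real.exp (-(ε ^ 2 / 2) * (hitCount o P)) = ∏ m, if hits o (P m) then c else 1 := by
    intro P
    rw [mul_comm, Real.exp_nat_mul]
    unfold hitCount
    rw [← Finset.prod_filter]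
    simp [Finset.prod_const, hc]
  simp_rw [hterm]
  have key : (∑ P : Fin M → Fin n → Axis, ∏ m, if hits o (P m) then c else 1)
      = (∑ p : Fin n → Axis, if hits o p then c else 1) ^ M := by
    rw [show (Finset.univ : Finset (Fin M → Fin n → Axis))
        = Fintype.piFinset (fun _ => Finset.univ) from by
      ext P; simp [Fintype.mem_piFinset]]
    rw [← Finset.prod_univ_sum (fun _ : Fin M => (Finset.univ : Finset (Fin n → Axis)))
      (fun _ p => if hits o p then c else 1)]
    simp
  rw [key, hcard, ← div_pow]
  congr 1
  have hsum : (∑ p : Fin n → Axis, if hits o p then c else 1)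
      = (3:ℝ)^n + (3:ℝ)^(n - weight o) * (c - 1) := by
    rw [Finset.sum_ite, Finset.sum_const, Finset.sum_const, hitcard o]
    have htot := Finset.card_filter_add_card_filter_not
      (s := (Finset.univ : Finset (Fin n → Axis))) (p := fun p => hits o p)
    rw [Finset.card_univ, Fintype.card_fun, hitcard o,
      show Fintype.card Axis = 3 from rfl, Fintype.card_fin] at htot
    have htotR : (3:ℝ)^(n - weight o)
        + ((Finset.univ.filter (fun p : Fin n → Axis => ¬ hits o p)).card : ℝ)
        = (3:ℝ)^n := by exact_mod_cast htot
    simp only [nsmul_eq_mul, mul_one]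
    push_cast
    linarith [htotR]
  rw [hsum]
  have h3w : (3:ℝ) ^ (n - weight o) * 3 ^ weight o = 3 ^ n := by
    rw [← pow_add]
    congr 1
    omega
  have h3pos : (3:ℝ) ^ n ≠ 0 := by positivity
  have hwpos : (3:ℝ) ^ weight o ≠ 0 := by positivity
  field_simp
  linear_combination (c - 1) * h3w
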